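/- There exists a constant c > 0 such that the following holds. Suppose G, H, W, k, n satisfy Assumption (★) with constant c. If 𝒜 is a simple arc-system in G of length at least a and size b whose arc-graph G_𝒜 has m arc-edges, then G[𝒜] contains an independent set of size at least a·b − m. -/

import Mathlib

open Finset

/-- `σ` lists the vertices of `G` in the order of a Hamilton cycle `H`:
it is a bijection from `ZMod n` such that consecutive indices give adjacent vertices. -/
def IsHamOrder {V : Type} [Fintype V] (G : SimpleGraph V) (n : ℕ) (σ : ZMod n → V) : Prop :=
  Function.Bijective σ ∧ ∀ i : ZMod n, G.Adj (σ i) (σ (i + 1))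

/-- A vertex is problematic if it has degree at most `2k` or belongs to `W`. -/
def Problematic {V : Type} [Fintype V] [DecidableEq V] (G : SimpleGraph V)
    [DecidableRel G.Adj] (W : Finset V) (k : ℕ) (v : V) : Prop :=
  G.degree v ≤ 2 * k ∨ v ∈ W

/-- `G` has a cycle of length `ℓ` passing through all vertices of `S`. -/
def HasCycleThrough {V : Type} (G : SimpleGraph V) (ℓ : ℕ) (S : Set V) : Prop :=
  ∃ (u : V) (w : G.Walk u u), w.IsCycle ∧ w.length = ℓ ∧ ∀ x ∈ S, x ∈ w.support

/-- Assumption (★) with constant `c`: `G` is a graph on `n` vertices with Hamilton cycle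
(order) `σ`, independence number at most `k`, `W` has at most `20k²` vertices, `G` has no
cycle of length `n − 1` through all of `W`, and `n ≥ c·k^(11/5)`. -/
def StarAssumption {V : Type} [Fintype V] [DecidableEq V] (G : SimpleGraph V) [DecidableRel G.Adj]
    (n k : ℕ) (σ : ZMod n → V) (W : Finset V) (c : ℝ) : Prop :=
  Fintype.card V = n ∧ IsHamOrder G n σ ∧
  (∀ s : Finset V, (∀ u ∈ s, ∀ v ∈ s, u ≠ v → ¬ G.Adj u v) → s.card ≤ k) ∧
  W.card ≤ 20 * k ^ 2 ∧
  ¬ HasCycleThrough G (n - 1) (W : Set V) ∧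
  c * (k : ℝ) ^ ((11 : ℝ) / 5) ≤ (n : ℝ)

/-- Two vertices are consecutive if they are neighbours on the Hamilton cycle. -/
def Consec {V : Type} (n : ℕ) (σ : ZMod n → V) (u v : V) : Prop :=
  ∃ i : ZMod n, (σ i = u ∧ σ (i + 1) = v) ∨ (σ i = v ∧ σ (i + 1) = u)

/-- A continuous set of vertices: one forming a subpath (interval) of the Hamilton cycle. -/
def ContinuousSet {V : Type} [DecidableEq V] (n : ℕ) (σ : ZMod n → V) (S : Finset V) : Prop :=
  ∃ (i : ZMod n) (m : ℕ), S = (Finset.range m).image (fun j : ℕ => σ (i + (j : ZMod n)))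

/-- `B` is a continuous closure of `A`: a minimum-size continuous set containing `A`. -/
def IsClosure {V : Type} [DecidableEq V] (n : ℕ) (σ : ZMod n → V) (A B : Finset V) : Prop :=
  ContinuousSet n σ B ∧ A ⊆ B ∧
    ∀ B' : Finset V, ContinuousSet n σ B' → A ⊆ B' → B.card ≤ B'.card

/-- An arc-system: a family of arcs together with a choice of continuous closure for each
arc, such that closures of distinct arcs are disjoint, closures contain no problematic
vertex, and no arc contains two consecutive vertices. -/
structure ArcSystem {V : Type} [Fintype V] [DecidableEq V] (G : SimpleGraph V)
    [DecidableRel G.Adj] (n k : ℕ) (σ : ZMod n → V) (W : Finset V) where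
  arcs : Finset (Finset V)
  cl : Finset V → Finset V
  closure_spec : ∀ A ∈ arcs, IsClosure n σ A (cl A)
  closures_disjoint : ∀ A ∈ arcs, ∀ B ∈ arcs, A ≠ B → Disjoint (cl A) (cl B)
  no_problematic : ∀ A ∈ arcs, ∀ v ∈ cl A, ¬ Problematic G W k v
  no_consec : ∀ A ∈ arcs, ∀ u ∈ A, ∀ v ∈ A, u ≠ v → ¬ Consec n σ u v

namespace ArcSystem

variable {V : Type} [Fintype V] [DecidableEq V] {G : SimpleGraph V} [DecidableRel G.Adj]
  {n k : ℕ} {σ : ZMod n → V} {W : Finset V}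

/-- An arc-system is independent if every closure has at most `k` vertices. -/
def Independent (𝒜 : ArcSystem G n k σ W) : Prop :=
  ∀ A ∈ 𝒜.arcs, (𝒜.cl A).card ≤ k

/-- Every arc of the system has at least `l` vertices. -/
def LengthGe (𝒜 : ArcSystem G n k σ W) (l : ℕ) : Prop :=
  ∀ A ∈ 𝒜.arcs, l ≤ A.card

end ArcSystem

/-- A vertex set `s` is `M₂`-free (for `G`) if the subgraph induced by `s`
contains no two vertex-disjoint edges. -/
def M2Free {V : Type} (G : SimpleGraph V) (s : Finset V) : Prop :=
  ¬ ∃ a b x y : V, a ∈ s ∧ b ∈ s ∧ x ∈ s ∧ y ∈ s ∧ G.Adj a b ∧ G.Adj x y ∧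
      a ≠ x ∧ a ≠ y ∧ b ≠ x ∧ b ≠ y

namespace ArcSystem

variable {V : Type} [Fintype V] [DecidableEq V] {G : SimpleGraph V} [DecidableRel G.Adj]
  {n k : ℕ} {σ : ZMod n → V} {W : Finset V}

/-- An arc-system is simple if it is independent and any two distinct arcs induce an
`M₂`-free subgraph of `G`. -/
def Simple (𝒜 : ArcSystem G n k σ W) : Prop :=
  𝒜.Independent ∧ ∀ A ∈ 𝒜.arcs, ∀ B ∈ 𝒜.arcs, A ≠ B → M2Free G (A ∪ B)

end ArcSystem

/-- `G[𝒜]` contains an independent set of size at least `m`. -/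
def HasIndepInArcs {V : Type} [Fintype V] [DecidableEq V] (G : SimpleGraph V)
    [DecidableRel G.Adj] {n k : ℕ} {σ : ZMod n → V} {W : Finset V}
    (𝒜 : ArcSystem G n k σ W) (m : ℕ) : Prop :=
  ∃ I : Finset V, (∀ v ∈ I, ∃ A ∈ 𝒜.arcs, v ∈ A) ∧
    (∀ u ∈ I, ∀ v ∈ I, u ≠ v → ¬ G.Adj u v) ∧ m ≤ I.card

/-- The constants `a_p = 10·3^p`. -/
def aP (p : ℕ) : ℕ := 10 * 3 ^ p

/-- The constants `b_p = 1000^p·4^(p²)`. -/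
def bP (p : ℕ) : ℕ := 1000 ^ p * 4 ^ (p ^ 2)

structure Cyc {V : Type} [Fintype V] [DecidableEq V] (G : SimpleGraph V)
    (X : Finset V) (ℓ : ℕ) where
  ρ : ℕ → V
  inj : ∀ j1 < ℓ, ∀ j2 < ℓ, ρ j1 = ρ j2 → j1 = j2
  adj : ∀ j, j + 1 < ℓ → G.Adj (ρ j) (ρ (j + 1))
  wrap : G.Adj (ρ (ℓ - 1)) (ρ 0)
  img : (Finset.range ℓ).image ρ = Finset.univ \ X

namespace Cyc

variable {V : Type} [Fintype V] [DecidableEq V] {G : SimpleGraph V} {X : Finset V} {ℓ : ℕ}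

/-- straight walk along ρ from `ρ 0` to `ρ m`. -/
def straight (c : Cyc G X ℓ) : (m : ℕ) → m < ℓ → G.Walk (c.ρ 0) (c.ρ m)
  | 0, _ => SimpleGraph.Walk.nil
  | (m+1), h => (c.straight m (by omega)).concat (c.adj m h)

lemma straight_support (c : Cyc G X ℓ) (m : ℕ) (h : m < ℓ) :
    (c.straight m h).support = (List.range (m+1)).map c.ρ := by
  induction m with
  | zero => simp [straight, List.range_succ]
  | succ m ih =>
    rw [straight, SimpleGraph.Walk.support_concat, ih (by omega)]
    rw [List.range_succ (n := m+1)]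
    simp [List.concat_eq_append]

lemma straight_length (c : Cyc G X ℓ) (m : ℕ) (h : m < ℓ) :
    (c.straight m h).length = m := by
  induction m with
  | zero => simp [straight]
  | succ m ih => rw [straight, SimpleGraph.Walk.length_concat, ih (by omega)]

lemma straight_edges (c : Cyc G X ℓ) (m : ℕ) (h : m < ℓ) :
    (c.straight m h).edges = (List.range m).map (fun j => s(c.ρ j, c.ρ (j+1))) := by
  induction m with
  | zero => simp [straight]
  | succ m ih =>
    rw [straight, SimpleGraph.Walk.edges_concat, ih (by omega), List.range_succ]
    simp [List.concat_eq_append]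

lemma toHasCycleThrough (c : Cyc G X ℓ) (h3 : 3 ≤ ℓ) (W : Finset V)
    (hW : ∀ w ∈ W, w ∉ X) : HasCycleThrough G ℓ (W : Set V) := by
  have hll : ℓ - 1 < ℓ := by omega
  set P := c.straight (ℓ-1) hll with hP
  refine ⟨c.ρ 0, SimpleGraph.Walk.cons c.wrap.symm P.reverse, ?_, ?_, ?_⟩
  · rw [SimpleGraph.Walk.cons_isCycle_iff]
    constructor
    · rw [SimpleGraph.Walk.isPath_reverse_iff]
      apply SimpleGraph.Walk.IsPath.mk'
      rw [c.straight_support (ℓ-1) hll]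
      refine List.Nodup.map_on ?_ List.nodup_range
      intro a ha b hb hab
      rw [List.mem_range] at ha hb
      exact c.inj a (by omega) b (by omega) hab
    · rw [SimpleGraph.Walk.edges_reverse, List.mem_reverse,
        c.straight_edges (ℓ-1) hll]
      intro hmem
      rw [List.mem_map] at hmem
      obtain ⟨j, hj, hje⟩ := hmem
      rw [List.mem_range] at hj
      rw [Sym2.eq_iff] at hje
      rcases hje with ⟨h1, h2⟩ | ⟨h1, h2⟩
      · have := c.inj j (by omega) 0 (by omega) h1
        have := c.inj (j+1) (by omega) (ℓ-1) (by omega) h2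
        omega
      · have := c.inj j (by omega) (ℓ-1) (by omega) h1
        have := c.inj (j+1) (by omega) 0 (by omega) h2
        omega
  · rw [SimpleGraph.Walk.length_cons, SimpleGraph.Walk.length_reverse,
      c.straight_length (ℓ-1) hll]
    omega
  · intro x hx
    simp only [Finset.mem_coe] at hx
    have hxX : x ∉ X := hW x hx
    have : x ∈ (Finset.range ℓ).image c.ρ := by
      rw [c.img]; simp [hxX]
    rw [Finset.mem_image] at this
    obtain ⟨j, hj, hje⟩ := this
    rw [Finset.mem_range] at hj
    rw [SimpleGraph.Walk.support_cons]
    right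
    have : x ∈ P.support := by
      rw [c.straight_support (ℓ-1) hll]
      exact List.mem_map.2 ⟨j, List.mem_range.2 (by omega), hje⟩
    show x ∈ P.reverse.support
    rw [SimpleGraph.Walk.support_reverse, List.mem_reverse]
    exact this

end Cyc

lemma succ_mod' {ℓ : ℕ} (hl : 2 ≤ ℓ) (a : ℕ) : (a+1) % ℓ = (a % ℓ + 1) % ℓ := by
  conv_lhs => rw [Nat.add_mod]
  rw [Nat.mod_eq_of_lt (show 1 < ℓ by omega)]

lemma addmod_inj' {ℓ : ℕ} (r a b : ℕ) (ha : a < ℓ) (hb : b < ℓ)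
    (h : (a+r) % ℓ = (b+r) % ℓ) : a = b := by
  have h2 : a % ℓ = b % ℓ := Nat.ModEq.add_right_cancel' r h
  rwa [Nat.mod_eq_of_lt ha, Nat.mod_eq_of_lt hb] at h2

namespace Cyc

variable {V : Type} [Fintype V] [DecidableEq V] {G : SimpleGraph V} {X : Finset V} {ℓ : ℕ}

lemma cyclic_adj (c : Cyc G X ℓ) (r : ℕ) (hr : r < ℓ) :
    G.Adj (c.ρ r) (c.ρ ((r+1) % ℓ)) := by
  rcases lt_or_ge (r+1) ℓ with h | h
  · rw [Nat.mod_eq_of_lt h]; exact c.adj r h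
  · have hr1 : r = ℓ - 1 := by omega
    have : (r+1) % ℓ = 0 := by
      have : r + 1 = ℓ := by omega
      simp [this]
    rw [this, hr1]; exact c.wrap

lemma card_compl (c : Cyc G X ℓ) : (Finset.univ \ X).card = ℓ := by
  rw [← c.img, Finset.card_image_of_injOn, Finset.card_range]
  intro a ha b hb hab
  rw [Finset.mem_coe, Finset.mem_range] at ha hb
  exact c.inj a ha b hb hab

lemma image_eq_of (c : Cyc G X ℓ) {τ : ℕ → V}
    (hsub : ∀ j < ℓ, ∃ i < ℓ, τ j = c.ρ i)
    (hinj : ∀ j1 < ℓ, ∀ j2 < ℓ, τ j1 = τ j2 → j1 = j2) :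
    (Finset.range ℓ).image τ = Finset.univ \ X := by
  apply Finset.eq_of_subset_of_card_le
  · intro v hv
    rw [Finset.mem_image] at hv
    obtain ⟨j, hj, hje⟩ := hv
    rw [Finset.mem_range] at hj
    obtain ⟨i, hi, hie⟩ := hsub j hj
    rw [← c.img, Finset.mem_image]
    exact ⟨i, Finset.mem_range.2 hi, by rw [← hie, hje]⟩
  · rw [c.card_compl, Finset.card_image_of_injOn, Finset.card_range]
    intro a ha b hb hab
    rw [Finset.mem_coe, Finset.mem_range] at ha hb
    exact hinj a ha b hb hab

/-- rotation of a cycle -/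
def rot (c : Cyc G X ℓ) (r : ℕ) (hl : 2 ≤ ℓ) : Cyc G X ℓ where
  ρ := fun j => c.ρ ((j + r) % ℓ)
  inj := fun j1 h1 j2 h2 h =>
    addmod_inj' r j1 j2 h1 h2
      (c.inj _ (Nat.mod_lt _ (by omega)) _ (Nat.mod_lt _ (by omega)) h)
  adj := by
    intro j hj
    have h2 : (j + 1 + r) % ℓ = ((j + r) % ℓ + 1) % ℓ := by
      rw [show j + 1 + r = (j + r) + 1 by ring, succ_mod' hl]
    show G.Adj (c.ρ ((j + r) % ℓ)) (c.ρ ((j + 1 + r) % ℓ))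
    rw [h2]
    exact c.cyclic_adj _ (Nat.mod_lt _ (by omega))
  wrap := by
    have h1 : (ℓ - 1 + r) % ℓ < ℓ := Nat.mod_lt _ (by omega)
    have h2 : ((ℓ - 1 + r) % ℓ + 1) % ℓ = (0 + r) % ℓ := by
      rw [← succ_mod' hl, show ℓ - 1 + r + 1 = r + ℓ by omega, Nat.add_mod_right,
        Nat.zero_add]
    have := c.cyclic_adj _ h1
    rwa [h2] at this
  img := by
    apply image_eq_of c
    · intro j hj
      exact ⟨(j + r) % ℓ, Nat.mod_lt _ (by omega), rfl⟩
    · intro j1 h1 j2 h2 h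
      exact addmod_inj' r j1 j2 h1 h2
        (c.inj _ (Nat.mod_lt _ (by omega)) _ (Nat.mod_lt _ (by omega)) h)

lemma rot_apply (c : Cyc G X ℓ) (r : ℕ) (hl : 2 ≤ ℓ) (j : ℕ) :
    (c.rot r hl).ρ j = c.ρ ((j + r) % ℓ) := rfl

/-- appending a new vertex at the wrap position of a "path". -/
lemma append {τ : ℕ → V} {x : V} (c : Cyc G X ℓ) (hl : 1 ≤ ℓ)
    (pinj : ∀ j1 < ℓ, ∀ j2 < ℓ, τ j1 = τ j2 → j1 = j2)
    (padj : ∀ j, j + 1 < ℓ → G.Adj (τ j) (τ (j + 1)))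
    (pimg : (Finset.range ℓ).image τ = Finset.univ \ X)
    (hx : x ∈ X)
    (h0 : G.Adj x (τ 0)) (h1 : G.Adj (τ (ℓ - 1)) x) :
    Nonempty (Cyc G (X.erase x) (ℓ + 1)) := by
  have hxim : ∀ j < ℓ, τ j ≠ x := by
    intro j hj he
    have : x ∈ Finset.univ \ X := by
      rw [← pimg, Finset.mem_image]; exact ⟨j, Finset.mem_range.2 hj, he⟩
    simp [hx] at this
  refine ⟨⟨fun j => if j < ℓ then τ j else x, ?_, ?_, ?_, ?_⟩⟩
  · intro j1 hj1 j2 hj2 h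
    by_cases e1 : j1 < ℓ <;> by_cases e2 : j2 < ℓ <;> simp [e1, e2] at h
    · exact pinj j1 e1 j2 e2 h
    · exact absurd h (hxim j1 e1)
    · exact absurd h.symm (hxim j2 e2)
    · omega
  · intro j hj
    by_cases e : j + 1 < ℓ
    · simpa [e, show j < ℓ by omega] using padj j e
    · show G.Adj (if j < ℓ then τ j else x) (if j + 1 < ℓ then τ (j+1) else x)
      rw [if_pos (by omega : j < ℓ), if_neg e]
      have : j = ℓ - 1 := by omega
      rw [this]; exact h1
  · simpa [show ¬ (ℓ + 1 - 1 < ℓ) by omega, show 0 < ℓ by omega] using h0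
  · have : (Finset.range (ℓ+1)).image (fun j => if j < ℓ then τ j else x)
        = insert x ((Finset.range ℓ).image τ) := by
      rw [Finset.range_add_one, Finset.image_insert]
      simp only [lt_irrefl, if_neg (lt_irrefl ℓ)]
      congr 1
      apply Finset.image_congr
      intro j hj
      rw [Finset.mem_coe, Finset.mem_range] at hj
      simp [hj]
    rw [this, pimg]
    ext v
    simp only [Finset.mem_insert, Finset.mem_sdiff, Finset.mem_univ, true_and,
      Finset.mem_erase]
    constructor
    · rintro (rfl | hv)
      · intro hc; exact hc.1 rfl
      · intro hc; exact hv hc.2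
    · intro hv
      by_cases hvx : v = x
      · left; exact hvx
      · right; intro hvX; exact hv ⟨hvx, hvX⟩

end Cyc

namespace Cyc

variable {V : Type} [Fintype V] [DecidableEq V] {G : SimpleGraph V} [DecidableRel G.Adj]
  {X : Finset V} {ℓ k : ℕ}

lemma mem_img (c : Cyc G X ℓ) {v : V} (hv : v ∉ X) : ∃ j < ℓ, c.ρ j = v := by
  have : v ∈ (Finset.range ℓ).image c.ρ := by rw [c.img]; simp [hv]
  rw [Finset.mem_image] at this
  obtain ⟨j, hj, hje⟩ := this
  exact ⟨j, Finset.mem_range.1 hj, hje⟩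

lemma not_mem_img (c : Cyc G X ℓ) {v : V} (hv : v ∈ X) (j : ℕ) (hj : j < ℓ) :
    c.ρ j ≠ v := by
  intro he
  have : v ∈ Finset.univ \ X := by
    rw [← c.img, Finset.mem_image]; exact ⟨j, Finset.mem_range.2 hj, he⟩
  simp [hv] at this

lemma insert_one (c : Cyc G X ℓ) {x : V} (hx : x ∈ X)
    (hXk : X.card ≤ k) (hdeg : 2*k+1 ≤ G.degree x)
    (hα : ∀ s : Finset V, (∀ u ∈ s, ∀ v ∈ s, u ≠ v → ¬ G.Adj u v) → s.card ≤ k) :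
    Nonempty (Cyc G (X.erase x) (ℓ + 1)) := by
  classical
  set P : Finset ℕ := (Finset.range ℓ).filter (fun p => G.Adj x (c.ρ p)) with hP
  have hPmem : ∀ p ∈ P, p < ℓ ∧ G.Adj x (c.ρ p) := by
    intro p hp; rw [hP, Finset.mem_filter, Finset.mem_range] at hp; exact hp
  -- lower bound on P.card
  have hPcard : k + 2 ≤ P.card := by
    have hNX : G.neighborFinset x \ X ⊆ P.image c.ρ := by
      intro v hv
      rw [Finset.mem_sdiff, SimpleGraph.mem_neighborFinset] at hv
      obtain ⟨j, hj, hje⟩ := c.mem_img hv.2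
      rw [Finset.mem_image]
      refine ⟨j, ?_, hje⟩
      rw [hP, Finset.mem_filter, Finset.mem_range]
      exact ⟨hj, by rw [hje]; exact hv.1⟩
    have h1 : G.neighborFinset x \ X = G.neighborFinset x \ (X.erase x) := by
      ext v
      simp only [Finset.mem_sdiff, SimpleGraph.mem_neighborFinset, Finset.mem_erase]
      constructor
      · rintro ⟨h, h2⟩; exact ⟨h, fun hc => h2 hc.2⟩
      · rintro ⟨h, h2⟩
        refine ⟨h, fun hc => h2 ⟨(G.ne_of_adj h).symm, hc⟩⟩
    have h2 : (G.neighborFinset x).card - (X.erase x).card ≤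
        (G.neighborFinset x \ (X.erase x)).card := Finset.le_card_sdiff _ _
    have h3 : (G.neighborFinset x).card = G.degree x := G.card_neighborFinset_eq_degree x
    have h4 : (X.erase x).card = X.card - 1 := Finset.card_erase_of_mem hx
    have h5 : 1 ≤ X.card := Finset.card_pos.2 ⟨x, hx⟩
    have h6 : (P.image c.ρ).card ≤ P.card := Finset.card_image_le
    have := Finset.card_le_card hNX
    rw [h1] at this
    omega
  have hl : 2 ≤ ℓ := by
    have : P.card ≤ ℓ := by
      calc P.card ≤ (Finset.range ℓ).card := Finset.card_le_card (Finset.filter_subset _ _)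
      _ = ℓ := Finset.card_range ℓ
    omega
  by_cases hA : ∃ p ∈ P, (p + 1) % ℓ ∈ P
  · -- insert between consecutive neighbours
    obtain ⟨p, hp, hp1⟩ := hA
    obtain ⟨hpl, hpadj⟩ := hPmem p hp
    obtain ⟨_, hp1adj⟩ := hPmem _ hp1
    set rc := c.rot (p+1) hl with hrc
    refine rc.append (by omega) rc.inj rc.adj rc.img hx ?_ ?_
    · show G.Adj x (c.ρ ((0 + (p+1)) % ℓ))
      rw [Nat.zero_add]; exact hp1adj
    · show G.Adj (c.ρ ((ℓ - 1 + (p+1)) % ℓ)) x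
      rw [show ℓ - 1 + (p+1) = p + ℓ by omega, Nat.add_mod_right,
        Nat.mod_eq_of_lt hpl]
      exact hpadj.symm
  · by_cases hB : ∃ p ∈ P, ∃ q ∈ P, p ≠ q ∧ G.Adj (c.ρ ((p+1) % ℓ)) (c.ρ ((q+1) % ℓ))
    · obtain ⟨p, hp, q, hq, hpq, hedge⟩ := hB
      obtain ⟨hpl, hpadj⟩ := hPmem p hp
      obtain ⟨hql, hqadj⟩ := hPmem q hq
      set rc := c.rot (q+1) hl with hrc
      have hrcl1 : rc.ρ (ℓ - 1) = c.ρ q := by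
        show c.ρ ((ℓ - 1 + (q+1)) % ℓ) = c.ρ q
        rw [show ℓ - 1 + (q+1) = q + ℓ by omega, Nat.add_mod_right, Nat.mod_eq_of_lt hql]
      have hrc0 : rc.ρ 0 = c.ρ ((q+1) % ℓ) := by
        show c.ρ ((0 + (q+1)) % ℓ) = _
        rw [Nat.zero_add]
      -- find index of c.ρ p in the rotated cycle
      have hpX : c.ρ p ∉ X := by
        intro hc
        exact c.not_mem_img hc p hpl rfl
      obtain ⟨t, htl, hte⟩ := rc.mem_img hpX
      have htne : t ≠ ℓ - 1 := by
        intro he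
        rw [he, hrcl1] at hte
        exact hpq (c.inj p hpl q hql hte.symm)
      have htlt : t < ℓ - 1 := by omega
      have hkey : (t + (q+1)) % ℓ = p :=
        c.inj _ (Nat.mod_lt _ (by omega)) p hpl hte
      have hsucc : rc.ρ (t+1) = c.ρ ((p+1) % ℓ) := by
        show c.ρ ((t + 1 + (q+1)) % ℓ) = _
        rw [show t + 1 + (q+1) = (t + (q+1)) + 1 by ring, succ_mod' hl, hkey]
      set e := ℓ - 1 - t with he
      have he1 : 1 ≤ e := by omega
      set τ : ℕ → V := fun j => if j < e then rc.ρ (ℓ - 1 - j) else rc.ρ (j - e) with hτ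
      have hτ1 : ∀ j, j < e → τ j = rc.ρ (ℓ - 1 - j) := by
        intro j hj; rw [hτ]; simp [hj]
      have hτ2 : ∀ j, ¬ (j < e) → τ j = rc.ρ (j - e) := by
        intro j hj; rw [hτ]; simp [hj]
      have pinj : ∀ j1 < ℓ, ∀ j2 < ℓ, τ j1 = τ j2 → j1 = j2 := by
        intro j1 h1 j2 h2 h
        by_cases e1 : j1 < e <;> by_cases e2 : j2 < e
        · rw [hτ1 j1 e1, hτ1 j2 e2] at h
          have := rc.inj _ (by omega) _ (by omega) h
          omega
        · rw [hτ1 j1 e1, hτ2 j2 e2] at h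
          have := rc.inj _ (by omega) _ (by omega) h
          omega
        · rw [hτ2 j1 e1, hτ1 j2 e2] at h
          have := rc.inj _ (by omega) _ (by omega) h
          omega
        · rw [hτ2 j1 e1, hτ2 j2 e2] at h
          have := rc.inj _ (by omega) _ (by omega) h
          omega
      have padj : ∀ j, j + 1 < ℓ → G.Adj (τ j) (τ (j + 1)) := by
        intro j hj
        by_cases e1 : j + 1 < e
        · rw [hτ1 j (by omega), hτ1 (j+1) e1]
          have harr : ℓ - 1 - (j + 1) + 1 = ℓ - 1 - j := by omega
          have := rc.adj (ℓ - 1 - (j+1)) (by omega)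
          rw [harr] at this
          exact this.symm
        · by_cases e2 : j + 1 = e
          · rw [hτ1 j (by omega), hτ2 (j+1) (by omega)]
            rw [show ℓ - 1 - j = t + 1 by omega, show j + 1 - e = 0 by omega]
            rw [hsucc, hrc0]
            exact hedge
          · rw [hτ2 j (by omega), hτ2 (j+1) (by omega)]
            have harr : j + 1 - e = (j - e) + 1 := by omega
            rw [harr]
            exact rc.adj (j - e) (by omega)
      have pimg : (Finset.range ℓ).image τ = Finset.univ \ X := by
        apply image_eq_of rc
        · intro j hj
          by_cases e1 : j < e
          · exact ⟨ℓ - 1 - j, by omega, hτ1 j e1⟩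
          · exact ⟨j - e, by omega, hτ2 j e1⟩
        · exact pinj
      refine rc.append (by omega) pinj padj pimg hx ?_ ?_
      · rw [hτ1 0 (by omega)]
        simpa [hrcl1] using hqadj
      · rw [hτ2 (ℓ - 1) (by omega), show ℓ - 1 - e = t by omega, hte]
        exact hpadj.symm
    · -- independent set of size > k : contradiction
      exfalso
      set S : Finset V := insert x (P.image (fun p => c.ρ ((p+1) % ℓ))) with hS
      have hxni : x ∉ P.image (fun p => c.ρ ((p+1) % ℓ)) := by
        rw [Finset.mem_image]
        rintro ⟨p, hp, hpe⟩
        exact c.not_mem_img hx _ (Nat.mod_lt _ (by omega)) hpe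
      have hScard : S.card = P.card + 1 := by
        rw [hS, Finset.card_insert_of_notMem hxni, Finset.card_image_of_injOn]
        intro p1 h1 p2 h2 h
        have hp1 := (hPmem p1 h1).1
        have hp2 := (hPmem p2 h2).1
        have := c.inj _ (Nat.mod_lt _ (by omega)) _ (Nat.mod_lt _ (by omega)) h
        exact addmod_inj' 1 p1 p2 hp1 hp2 this
      have hind : ∀ u ∈ S, ∀ v ∈ S, u ≠ v → ¬ G.Adj u v := by
        intro u hu v hv huv
        rw [hS, Finset.mem_insert] at hu hv
        rcases hu with rfl | hu <;> rcases hv with rfl | hv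
        · exact absurd rfl huv
        · rw [Finset.mem_image] at hv
          obtain ⟨p, hp, rfl⟩ := hv
          intro hadj
          exact hA ⟨p, hp, by
            rw [hP, Finset.mem_filter, Finset.mem_range]
            exact ⟨Nat.mod_lt _ (by omega), hadj⟩⟩
        · rw [Finset.mem_image] at hu
          obtain ⟨p, hp, rfl⟩ := hu
          intro hadj
          exact hA ⟨p, hp, by
            rw [hP, Finset.mem_filter, Finset.mem_range]
            exact ⟨Nat.mod_lt _ (by omega), hadj.symm⟩⟩
        · rw [Finset.mem_image] at hu hv
          obtain ⟨p, hp, rfl⟩ := hu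
          obtain ⟨q, hq, rfl⟩ := hv
          intro hadj
          have hpq : p ≠ q := by
            rintro rfl; exact huv rfl
          exact hB ⟨p, hp, q, hq, hpq, hadj⟩
      have := hα S hind
      omega

end Cyc

section Core

variable {V : Type} [Fintype V] [DecidableEq V] {G : SimpleGraph V} [DecidableRel G.Adj]

lemma descend (n k : ℕ) (hcard : Fintype.card V = n) (hn4 : 4 ≤ n)
    (hα : ∀ s : Finset V, (∀ u ∈ s, ∀ v ∈ s, u ≠ v → ¬ G.Adj u v) → s.card ≤ k)
    (W : Finset V) (hnoW : ¬ HasCycleThrough G (n-1) (W : Set V)) :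
    ∀ s : ℕ, 1 ≤ s → ∀ (X : Finset V) (ℓ : ℕ), X.card = s → s ≤ k →
      (∀ v ∈ X, 2*k+1 ≤ G.degree v ∧ v ∉ W) → Cyc G X ℓ → False := by
  intro s
  induction s with
  | zero => omega
  | succ s ih =>
    intro _ X ℓ hXs hsk hprop c
    have hXuniv : X ⊆ Finset.univ := Finset.subset_univ X
    have hcompl : (Finset.univ \ X).card = n - (s+1) := by
      rw [Finset.card_sdiff_of_subset hXuniv, Finset.card_univ, hcard, hXs]
    have hℓ : ℓ = n - (s+1) := by rw [← c.card_compl, hcompl]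
    by_cases hs : s = 0
    · subst hs
      have h3 : 3 ≤ ℓ := by omega
      apply hnoW
      have := c.toHasCycleThrough h3 W (by
        intro w hw hwX
        exact (hprop w hwX).2 hw)
      rwa [hℓ] at this
    · obtain ⟨x, hxX⟩ := Finset.card_pos.1 (show 0 < X.card by omega)
      obtain ⟨c'⟩ := c.insert_one hxX (by omega) (hprop x hxX).1 hα
      exact ih (by omega) (X.erase x) (ℓ+1)
        (by rw [Finset.card_erase_of_mem hxX, hXs]; omega) (by omega)
        (fun v hv => hprop v (Finset.mem_of_mem_erase hv)) c'

lemma core (n k : ℕ) (W : Finset V) (f : ℕ → V) (d : ℕ)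
    (hcard : Fintype.card V = n)
    (hα : ∀ s : Finset V, (∀ u ∈ s, ∀ v ∈ s, u ≠ v → ¬ G.Adj u v) → s.card ≤ k)
    (hnoW : ¬ HasCycleThrough G (n-1) (W : Set V))
    (hinj : ∀ r1 < n, ∀ r2 < n, f r1 = f r2 → r1 = r2)
    (hadj : ∀ r, G.Adj (f r) (f (r+1)))
    (hper : ∀ r, f (r + n) = f r)
    (hd2 : 2 ≤ d) (hdk : d ≤ k) (hk1 : 1 ≤ k) (hkn : 4 * k ≤ n)
    (hchord : G.Adj (f 0) (f d))
    (hmid : ∀ r, 1 ≤ r → r < d → 2*k+1 ≤ G.degree (f r) ∧ f r ∉ W) :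
    False := by
  classical
  have hdn : d < n := by omega
  have hn4 : 4 ≤ n := by omega
  set X₀ : Finset V := (Finset.Ico 1 d).image f with hX₀
  set ℓ₀ : ℕ := n - d + 1 with hℓ₀
  set ρ₀ : ℕ → V := fun j => if j = 0 then f 0 else f (d - 1 + j) with hρ₀
  have hρ0 : ρ₀ 0 = f 0 := by simp [hρ₀]
  have hρpos : ∀ j, j ≠ 0 → ρ₀ j = f (d - 1 + j) := by
    intro j hj; simp [hρ₀, hj]
  -- univ is the image of f on range n
  have huniv : (Finset.range n).image f = Finset.univ := by
    apply Finset.eq_univ_of_card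
    rw [Finset.card_image_of_injOn, Finset.card_range, hcard]
    intro a ha b hb hab
    rw [Finset.mem_coe, Finset.mem_range] at ha hb
    exact hinj a ha b hb hab
  have hXmem : ∀ v, v ∈ X₀ ↔ ∃ r, 1 ≤ r ∧ r < d ∧ f r = v := by
    intro v
    rw [hX₀, Finset.mem_image]
    constructor
    · rintro ⟨r, hr, hre⟩
      rw [Finset.mem_Ico] at hr
      exact ⟨r, hr.1, hr.2, hre⟩
    · rintro ⟨r, h1, h2, hre⟩
      exact ⟨r, Finset.mem_Ico.2 ⟨h1, h2⟩, hre⟩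
  have c : Cyc G X₀ ℓ₀ := by
    refine ⟨ρ₀, ?_, ?_, ?_, ?_⟩
    · intro j1 h1 j2 h2 h
      by_cases e1 : j1 = 0 <;> by_cases e2 : j2 = 0
      · omega
      · rw [e1, hρ0, hρpos j2 e2] at h
        have := hinj 0 (by omega) (d - 1 + j2) (by omega) h
        omega
      · rw [e2, hρ0, hρpos j1 e1] at h
        have := hinj (d - 1 + j1) (by omega) 0 (by omega) h
        omega
      · rw [hρpos j1 e1, hρpos j2 e2] at h
        have := hinj (d - 1 + j1) (by omega) (d - 1 + j2) (by omega) h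
        omega
    · intro j hj
      by_cases e : j = 0
      · subst e
        rw [hρ0, hρpos 1 (by omega), show d - 1 + 1 = d by omega]
        exact hchord
      · rw [hρpos j e, hρpos (j+1) (by omega), show d - 1 + (j+1) = (d-1+j) + 1 by omega]
        exact hadj _
    · have hne : ℓ₀ - 1 ≠ 0 := by omega
      rw [hρ0, hρpos _ hne, show d - 1 + (ℓ₀ - 1) = n - 1 by omega]
      have := hadj (n-1)
      rw [show n - 1 + 1 = 0 + n by omega, hper 0] at this
      exact this
    · ext v
      simp only [Finset.mem_sdiff, Finset.mem_univ, true_and, Finset.mem_image,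
        Finset.mem_range]
      constructor
      · rintro ⟨j, hj, rfl⟩ hvX
        rw [hXmem] at hvX
        obtain ⟨r, hr1, hr2, hre⟩ := hvX
        by_cases e : j = 0
        · rw [e, hρ0] at hre
          have := hinj r (by omega) 0 (by omega) hre
          omega
        · rw [hρpos j e] at hre
          have := hinj r (by omega) (d - 1 + j) (by omega) hre
          omega
      · intro hvX
        have hv : v ∈ (Finset.range n).image f := by rw [huniv]; exact Finset.mem_univ v
        rw [Finset.mem_image] at hv
        obtain ⟨r, hr, hre⟩ := hv
        rw [Finset.mem_range] at hr
        by_cases e0 : r = 0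
        · exact ⟨0, by omega, by rw [hρ0, ← e0]; exact hre⟩
        · by_cases ed : r < d
          · exact absurd ((hXmem v).2 ⟨r, by omega, ed, hre⟩) hvX
          · refine ⟨r - d + 1, by omega, ?_⟩
            rw [hρpos _ (by omega), show d - 1 + (r - d + 1) = r by omega]
            exact hre
  have hX₀card : X₀.card = d - 1 := by
    rw [hX₀, Finset.card_image_of_injOn, Nat.card_Ico]
    intro a ha b hb hab
    rw [Finset.mem_coe, Finset.mem_Ico] at ha hb
    exact hinj a (by omega) b (by omega) hab
  exact descend n k hcard hn4 hα W hnoW (d-1) (by omega) X₀ ℓ₀ hX₀card (by omega)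
    (by
      intro v hv
      rw [hXmem] at hv
      obtain ⟨r, h1, h2, rfl⟩ := hv
      exact hmid r h1 h2) c

end Core


section Bridge

variable {V : Type} [Fintype V] [DecidableEq V] {G : SimpleGraph V} [DecidableRel G.Adj]

lemma zcast_inj {n : ℕ} [NeZero n] {r1 r2 : ℕ} (h1 : r1 < n) (h2 : r2 < n)
    (h : (r1 : ZMod n) = r2) : r1 = r2 := by
  rw [← ZMod.val_cast_of_lt h1, ← ZMod.val_cast_of_lt h2, h]

lemma arc_indep (n k : ℕ) (σ : ZMod n → V) (W : Finset V)
    (hstar : StarAssumption G n k σ W 4) (𝒜 : ArcSystem G n k σ W)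
    (hsimple : 𝒜.Simple) {A : Finset V} (hA : A ∈ 𝒜.arcs)
    {u v : V} (hu : u ∈ A) (hv : v ∈ A) : ¬ G.Adj u v := by
  classical
  intro hadj
  obtain ⟨hcard, ⟨hbij, hσadj⟩, hα, hWcard, hnoW, hc⟩ := hstar
  -- k ≥ 1
  have hk1 : 1 ≤ k := by
    have := hα {u} (by
      intro a ha b hb hab
      rw [Finset.mem_singleton] at ha hb
      exact absurd (ha.trans hb.symm) hab)
    simpa using this
  -- n ≥ 4k
  have hkn : 4 * k ≤ n := by
    have h1 : (1:ℝ) ≤ (k:ℝ) := by exact_mod_cast hk1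
    have h2 : (k:ℝ) ^ (1:ℝ) ≤ (k:ℝ) ^ ((11:ℝ)/5) :=
      Real.rpow_le_rpow_of_exponent_le h1 (by norm_num)
    rw [Real.rpow_one] at h2
    have h3 : (4:ℝ) * (k:ℝ) ≤ (n:ℝ) := by
      calc (4:ℝ) * (k:ℝ) ≤ 4 * (k:ℝ) ^ ((11:ℝ)/5) := by linarith
      _ ≤ (n:ℝ) := hc
    exact_mod_cast h3
  have hn0 : 0 < n := by omega
  haveI : NeZero n := ⟨by omega⟩
  -- unpack the closure
  obtain ⟨⟨i, m, hclim⟩, hsub, _⟩ := 𝒜.closure_spec A hA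
  have hclk : (𝒜.cl A).card ≤ k := hsimple.1 A hA
  -- m ≤ n
  have hmn : m ≤ n := by
    by_contra hmn
    push_neg at hmn
    have huniv : ∀ w : V, w ∈ 𝒜.cl A := by
      intro w
      obtain ⟨z, rfl⟩ := hbij.surjective w
      rw [hclim, Finset.mem_image]
      refine ⟨(z - i).val, Finset.mem_range.2 (by
        have := ZMod.val_lt (z - i); omega), ?_⟩
      rw [ZMod.natCast_val, ZMod.cast_id]
      ring_nf
    have h := Finset.card_le_card (show Finset.univ ⊆ 𝒜.cl A from fun w _ => huniv w)
    rw [Finset.card_univ, hcard] at h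
    omega
  -- m ≤ k
  have hmk : m ≤ k := by
    have : (𝒜.cl A).card = m := by
      rw [hclim, Finset.card_image_of_injOn, Finset.card_range]
      intro a ha b hb hab
      rw [Finset.mem_coe, Finset.mem_range] at ha hb
      have := hbij.injective hab
      have := add_left_cancel this
      exact zcast_inj (by omega) (by omega) this
    omega
  -- write u and v in coordinates
  obtain ⟨s, hs, hsu⟩ : ∃ s, s < m ∧ σ (i + (s:ZMod n)) = u := by
    have := hsub hu
    rw [hclim, Finset.mem_image] at this
    obtain ⟨j, hj, hje⟩ := this
    exact ⟨j, Finset.mem_range.1 hj, hje⟩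
  obtain ⟨t, ht, htv⟩ : ∃ t, t < m ∧ σ (i + (t:ZMod n)) = v := by
    have := hsub hv
    rw [hclim, Finset.mem_image] at this
    obtain ⟨j, hj, hje⟩ := this
    exact ⟨j, Finset.mem_range.1 hj, hje⟩
  -- main symmetric argument
  have go : ∀ s t : ℕ, s < t → t < m →
      σ (i + (s:ZMod n)) ∈ A → σ (i + (t:ZMod n)) ∈ A →
      G.Adj (σ (i + (s:ZMod n))) (σ (i + (t:ZMod n))) → False := by
    clear hsu htv hs ht hadj hu hv
    intro s t hst ht hu hv hadj
    set w₀ : ZMod n := i + (s:ZMod n) with hw₀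
    set f : ℕ → V := fun r => σ (w₀ + (r:ZMod n)) with hf
    set d : ℕ := t - s with hd
    have hd1 : d ≠ 1 := by
      intro hd1
      apply 𝒜.no_consec A hA _ hu _ hv hadj.ne
      refine ⟨w₀, Or.inl ⟨?_, ?_⟩⟩
      · simp [hw₀]
      · congr 1
        have : (t : ZMod n) = (s : ZMod n) + 1 := by
          have : t = s + 1 := by omega
          rw [this]; push_cast; ring
        rw [hw₀, this]; ring
    have hd2 : 2 ≤ d := by omega
    have hcast : ((d : ℕ) : ZMod n) = (t : ZMod n) - (s : ZMod n) := by
      rw [hd, Nat.cast_sub hst.le]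
    apply core (G := G) n k W f d hcard hα hnoW ?_ ?_ ?_ hd2 (by omega) hk1 hkn ?_ ?_
    · intro r1 h1 r2 h2 h
      have := hbij.injective h
      have := add_left_cancel this
      exact zcast_inj h1 h2 this
    · intro r
      show G.Adj (σ (w₀ + ((r:ℕ):ZMod n))) (σ (w₀ + ((r+1:ℕ):ZMod n)))
      have h1 : (w₀ + ((r:ℕ):ZMod n)) + 1 = w₀ + ((r+1 : ℕ) : ZMod n) := by
        push_cast; ring
      have := hσadj (w₀ + ((r:ℕ):ZMod n))
      rwa [h1] at this
    · intro r
      show σ (w₀ + ((r + n : ℕ) : ZMod n)) = σ (w₀ + ((r:ℕ) : ZMod n))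
      congr 1
      push_cast
      rw [ZMod.natCast_self]
      ring
    · show G.Adj (f 0) (f d)
      have h0 : f 0 = σ w₀ := by
        show σ (w₀ + ((0:ℕ):ZMod n)) = σ w₀
        norm_num
      have hD : f d = σ (i + (t : ZMod n)) := by
        show σ (w₀ + ((d:ℕ) : ZMod n)) = _
        rw [hcast, hw₀]
        congr 1
        ring
      rw [h0, hD]
      exact hadj
    · intro r h1 h2
      have hmem : f r ∈ 𝒜.cl A := by
        rw [hclim, Finset.mem_image]
        refine ⟨s + r, Finset.mem_range.2 (by omega), ?_⟩
        rw [hf, hw₀]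
        congr 1
        push_cast
        ring
      have := 𝒜.no_problematic A hA _ hmem
      rw [Problematic] at this
      push_neg at this
      exact ⟨by omega, this.2⟩
  have hstne : s ≠ t := by
    intro he
    rw [he, htv] at hsu
    exact hadj.ne hsu.symm
  rcases lt_or_gt_of_ne hstne with h | h
  · exact go s t h ht (by rw [hsu]; exact hu) (by rw [htv]; exact hv)
      (by rw [hsu, htv]; exact hadj)
  · exact go t s h hs (by rw [htv]; exact hv) (by rw [hsu]; exact hu)
      (by rw [htv, hsu]; exact hadj.symm)

end Bridge


/-- There is a constant `c > 0` such that under Assumption (★) with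
constant `c`: if `𝒜` is a simple arc-system of length at least `a` and size `b` whose
arc-graph has `m` arc-edges (so `2m` ordered pairs of distinct arcs joined by an edge of
`G`), then `G[𝒜]` contains an independent set of size at least `a·b − m`. -/
theorem statement7 :
    ∃ c : ℝ, 0 < c ∧
      ∀ (V : Type) [Fintype V] [DecidableEq V] (G : SimpleGraph V) [DecidableRel G.Adj]
        (n k : ℕ) (σ : ZMod n → V) (W : Finset V),
        StarAssumption G n k σ W c →
        ∀ (𝒜 : ArcSystem G n k σ W) (a b m : ℕ),
          𝒜.Simple → 𝒜.LengthGe a → 𝒜.arcs.card = b →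
          2 * m = ((𝒜.arcs ×ˢ 𝒜.arcs).filter
            (fun P => P.1 ≠ P.2 ∧ ∃ u ∈ P.1, ∃ v ∈ P.2, G.Adj u v)).card →
          HasIndepInArcs G 𝒜 (a * b - m) := by
  classical
  refine ⟨4, by norm_num, ?_⟩
  intro V _ _ G _ n k σ W hstar 𝒜 a b m hsimple hlen hb hm
  classical
  have hindep : ∀ A ∈ 𝒜.arcs, ∀ u ∈ A, ∀ v ∈ A, ¬ G.Adj u v := by
    intro A hA u hu v hv
    exact arc_indep n k σ W hstar 𝒜 hsimple hA hu hv
  have hdisA : ∀ A ∈ 𝒜.arcs, ∀ B ∈ 𝒜.arcs, A ≠ B → Disjoint A B := by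
    intro A hA B hB hAB
    exact Finset.disjoint_of_subset_left (𝒜.closure_spec A hA).2.1
      (Finset.disjoint_of_subset_right (𝒜.closure_spec B hB).2.1
        (𝒜.closures_disjoint A hA B hB hAB))
  set U : Finset V := 𝒜.arcs.biUnion id with hU
  have hUcard : a * b ≤ U.card := by
    have hcb : U.card = ∑ A ∈ 𝒜.arcs, A.card := by
      rw [hU]
      exact Finset.card_biUnion (fun A hA B hB hAB => hdisA A hA B hB hAB)
    have h1 : 𝒜.arcs.card • a ≤ ∑ A ∈ 𝒜.arcs, A.card :=
      Finset.card_nsmul_le_sum 𝒜.arcs _ a (fun A hA => hlen A hA)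
    rw [smul_eq_mul, hb, mul_comm] at h1
    omega
  set Q : Finset (Finset V × Finset V) := (𝒜.arcs ×ˢ 𝒜.arcs).filter
    (fun P => P.1 ≠ P.2 ∧ ∃ u ∈ P.1, ∃ v ∈ P.2, G.Adj u v) with hQ
  have hQmem : ∀ P ∈ Q, P.1 ∈ 𝒜.arcs ∧ P.2 ∈ 𝒜.arcs ∧ P.1 ≠ P.2 ∧
      ∃ u ∈ P.1, ∃ v ∈ P.2, G.Adj u v := by
    intro P hP
    rw [hQ, Finset.mem_filter, Finset.mem_product] at hP
    exact ⟨hP.1.1, hP.1.2, hP.2.1, hP.2.2⟩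
  set Q' : Finset (Finset (Finset V)) :=
    Q.image (fun P => ({P.1, P.2} : Finset (Finset V))) with hQ'
  -- each fiber has exactly two elements
  have hQcard : Q.card = 2 * Q'.card := by
    rw [Finset.card_eq_sum_card_fiberwise
      (f := fun P => ({P.1, P.2} : Finset (Finset V))) (t := Q')
      (fun P hP => Finset.mem_image_of_mem _ hP)]
    rw [Finset.sum_congr rfl (g := fun _ => 2) ?_, Finset.sum_const, smul_eq_mul,
      mul_comm]
    intro s hs
    rw [hQ', Finset.mem_image] at hs
    obtain ⟨P₀, hP₀, hP₀s⟩ := hs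
    obtain ⟨hP1, hP2, hPne, u₀, hu₀, v₀, hv₀, he₀⟩ := hQmem P₀ hP₀
    have hswap : (P₀.2, P₀.1) ∈ Q := by
      rw [hQ, Finset.mem_filter, Finset.mem_product]
      exact ⟨⟨hP2, hP1⟩, hPne.symm, v₀, hv₀, u₀, hu₀, he₀.symm⟩
    have : Q.filter (fun P => ({P.1, P.2} : Finset (Finset V)) = s)
        = {P₀, (P₀.2, P₀.1)} := by
      ext P
      rw [Finset.mem_filter, Finset.mem_insert, Finset.mem_singleton]
      constructor
      · rintro ⟨hPQ, hPs⟩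
        obtain ⟨_, _, hPne', _⟩ := hQmem P hPQ
        rw [← hP₀s] at hPs
        have m1 : P.1 = P₀.1 ∨ P.1 = P₀.2 := by
          have : P.1 ∈ ({P₀.1, P₀.2} : Finset (Finset V)) := by
            rw [← hPs]; simp
          simpa using this
        have m2 : P.2 = P₀.1 ∨ P.2 = P₀.2 := by
          have : P.2 ∈ ({P₀.1, P₀.2} : Finset (Finset V)) := by
            rw [← hPs]; simp
          simpa using this
        rcases m1 with h1 | h1 <;> rcases m2 with h2 | h2
        · exact absurd (h1.trans h2.symm) hPne'
        · left; exact Prod.ext h1 h2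
        · right; exact Prod.ext h1 h2
        · exact absurd (h1.trans h2.symm) hPne'
      · rintro (rfl | rfl)
        · exact ⟨hP₀, hP₀s⟩
        · refine ⟨hswap, ?_⟩
          rw [← hP₀s]
          exact Finset.pair_comm _ _
    rw [this, Finset.card_insert_of_notMem, Finset.card_singleton]
    rw [Finset.mem_singleton]
    intro hc
    exact hPne (congrArg Prod.fst hc)
  have hQ'm : Q'.card = m := by omega
  -- a "center" for each adjacent pair of arcs
  have hex : ∀ s ∈ Q', ∃ c : V, ∀ x y : V, (∃ T ∈ s, x ∈ T) → (∃ T ∈ s, y ∈ T) →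
      G.Adj x y → c = x ∨ c = y := by
    intro s hs
    rw [hQ', Finset.mem_image] at hs
    obtain ⟨P₀, hP₀, hP₀s⟩ := hs
    obtain ⟨hP1, hP2, hPne, u₀, hu₀, v₀, hv₀, he₀⟩ := hQmem P₀ hP₀
    set A := P₀.1
    set B := P₀.2
    have hmem : ∀ x : V, (∃ T ∈ s, x ∈ T) ↔ (x ∈ A ∨ x ∈ B) := by
      intro x
      rw [← hP₀s]
      constructor
      · rintro ⟨T, hT, hxT⟩
        rw [Finset.mem_insert, Finset.mem_singleton] at hT
        rcases hT with rfl | rfl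
        · exact Or.inl hxT
        · exact Or.inr hxT
      · rintro (h | h)
        · exact ⟨A, by simp, h⟩
        · exact ⟨B, by simp, h⟩
    have hM2 := hsimple.2 A hP1 B hP2 hPne
    rw [M2Free] at hM2
    -- every edge in A ∪ B meets {u₀, v₀}
    have hmeets : ∀ x y : V, (x ∈ A ∨ x ∈ B) → (y ∈ A ∨ y ∈ B) → G.Adj x y →
        u₀ = x ∨ u₀ = y ∨ v₀ = x ∨ v₀ = y := by
      intro x y hx hy hxy
      by_contra hcon
      push_neg at hcon
      obtain ⟨h1, h2, h3, h4⟩ := hcon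
      have hmem' : ∀ z : V, (z ∈ A ∨ z ∈ B) → z ∈ A ∪ B := by
        intro z hz
        rw [Finset.mem_union]; exact hz
      exact hM2 ⟨u₀, v₀, x, y, Finset.mem_union_left _ hu₀, Finset.mem_union_right _ hv₀,
        hmem' x hx, hmem' y hy, he₀, hxy, h1, h2, h3, h4⟩
    by_cases hall : ∀ x y : V, (x ∈ A ∨ x ∈ B) → (y ∈ A ∨ y ∈ B) → G.Adj x y →
        u₀ = x ∨ u₀ = y
    · refine ⟨u₀, ?_⟩
      intro x y hx hy hxy
      exact hall x y ((hmem x).1 hx) ((hmem y).1 hy) hxy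
    · push_neg at hall
      obtain ⟨x₁, y₁, hx₁, hy₁, he₁, hne1, hne2⟩ := hall
      -- the edge x₁y₁ contains v₀ : get w with Adj v₀ w, w ≠ u₀
      obtain ⟨w, hwAB, hvw, hwu⟩ : ∃ w : V, (w ∈ A ∨ w ∈ B) ∧ G.Adj v₀ w ∧ w ≠ u₀ := by
        rcases hmeets x₁ y₁ hx₁ hy₁ he₁ with h | h | h | h
        · exact absurd h hne1
        · exact absurd h hne2
        · exact ⟨y₁, hy₁, h ▸ he₁, fun hc => hne2 (hc ▸ rfl)⟩
        · exact ⟨x₁, hx₁, (h ▸ he₁).symm, fun hc => hne1 (hc ▸ rfl)⟩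
      refine ⟨v₀, ?_⟩
      intro x y hx hy hxy
      rw [hmem] at hx hy
      by_contra hcon
      push_neg at hcon
      obtain ⟨hvx, hvy⟩ := hcon
      -- edge xy misses v₀; it must meet u₀ (by hmeets) and w (by M2 with v₀w)
      have hu : u₀ = x ∨ u₀ = y := by
        rcases hmeets x y hx hy hxy with h | h | h | h
        · exact Or.inl h
        · exact Or.inr h
        · exact absurd h hvx
        · exact absurd h hvy
      have hw : w = x ∨ w = y := by
        by_contra hcw
        push_neg at hcw
        have hmem' : ∀ z : V, (z ∈ A ∨ z ∈ B) → z ∈ A ∪ B := by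
          intro z hz
          rw [Finset.mem_union]; exact hz
        exact hM2 ⟨v₀, w, x, y, Finset.mem_union_right _ hv₀, hmem' w hwAB,
          hmem' x hx, hmem' y hy, hvw, hxy, hvx, hvy, hcw.1, hcw.2⟩
      -- so the edge xy is the edge u₀w
      have huw : G.Adj u₀ w := by
        rcases hu with rfl | rfl <;> rcases hw with rfl | rfl
        · exact absurd rfl hwu
        · exact hxy
        · exact hxy.symm
        · exact absurd rfl hwu
      -- triangle u₀ v₀ w contradicts independence of arcs
      rcases hwAB with hwA | hwB
      · exact hindep A hP1 u₀ hu₀ w hwA huw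
      · exact hindep B hP2 v₀ hv₀ w hwB hvw
  set D : Finset V := Q'.attach.image (fun p => (hex p.1 p.2).choose) with hD
  have hDcard : D.card ≤ m := by
    calc D.card ≤ Q'.attach.card := Finset.card_image_le
    _ = Q'.card := Finset.card_attach
    _ = m := hQ'm
  refine ⟨U \ D, ?_, ?_, ?_⟩
  · intro v hv
    have := (Finset.mem_sdiff.1 hv).1
    rw [hU, Finset.mem_biUnion] at this
    obtain ⟨A, hA, hvA⟩ := this
    exact ⟨A, hA, hvA⟩
  · intro u hu v hv huv hadj
    rw [Finset.mem_sdiff] at hu hv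
    obtain ⟨huU, huD⟩ := hu
    obtain ⟨hvU, hvD⟩ := hv
    rw [hU, Finset.mem_biUnion] at huU hvU
    obtain ⟨A, hA, huA⟩ := huU
    obtain ⟨B, hB, hvB⟩ := hvU
    by_cases hAB : A = B
    · exact hindep A hA u huA v (hAB ▸ hvB) hadj
    · have hPQ : (A, B) ∈ Q := by
        rw [hQ, Finset.mem_filter, Finset.mem_product]
        exact ⟨⟨hA, hB⟩, hAB, u, huA, v, hvB, hadj⟩
      have hsQ' : ({A, B} : Finset (Finset V)) ∈ Q' :=
        Finset.mem_image_of_mem _ hPQ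
      have hc := (hex _ hsQ').choose_spec u v
        ⟨A, by simp, huA⟩ ⟨B, by simp, hvB⟩ hadj
      have hcD : (hex _ hsQ').choose ∈ D := by
        rw [hD, Finset.mem_image]
        exact ⟨⟨{A, B}, hsQ'⟩, Finset.mem_attach _ _, rfl⟩
      rcases hc with rfl | rfl
      · exact huD hcD
      · exact hvD hcD
  · have h1 : U.card - D.card ≤ (U \ D).card := Finset.le_card_sdiff D U
    omega
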